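/- Let p ≥ 1 be an integer and 𝐇 a set of graphs such that every 𝐇-free graph is perfectly divisible. Then every ((p−1)K₂ ∪ 𝐇)-free graph G satisfies χ(G) ≤ C(ω(G)−1+2p, 2p), where C(a,b) denotes the binomial coefficient. -/

import Mathlib

open SimpleGraph

/-- `pK₂`: the disjoint union of `p` copies of the single-edge graph `K₂`. -/
def pK2 (p : ℕ) : SimpleGraph (Fin p × Fin 2) where
  Adj x y := x.1 = y.1 ∧ x.2 ≠ y.2
  symm := ⟨fun _ _ h => ⟨h.1.symm, h.2.symm⟩⟩
  loopless := ⟨fun _ h => h.2 rfl⟩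

/-- A graph is perfect if every induced subgraph has chromatic number equal to
its clique number. -/
def IsPerfect {V : Type} (G : SimpleGraph V) : Prop :=
  ∀ s : Set V, (G.induce s).chromaticNumber = ((G.induce s).cliqueNum : ℕ∞)

/-- A graph is perfectly divisible if the vertex set of every (nonempty) induced
subgraph `H` can be partitioned into sets `A` and `B` such that `H[A]` is perfect
and `ω(H[B]) < ω(H)`. -/
def PerfectlyDivisible {V : Type} (G : SimpleGraph V) : Prop :=
  ∀ s : Set V, s.Nonempty → ∃ A B : Set V, A ∪ B = s ∧ Disjoint A B ∧
    IsPerfect (G.induce A) ∧ (G.induce B).cliqueNum < (G.induce s).cliqueNum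


lemma pk2_adj {p : ℕ} {x y : Fin p × Fin 2} : (pK2 p).Adj x y ↔ x.1 = y.1 ∧ x.2 ≠ y.2 := Iff.rfl

section Ext
variable {V : Type} {G : SimpleGraph V}

lemma free_extend {Wi : Type} {Hi : SimpleGraph Wi} {k : ℕ} (s : Set V) (a b : V)
    (hab : G.Adj a b)
    (ha : ∀ u ∈ s, ¬ G.Adj a u ∧ a ≠ u) (hb : ∀ u ∈ s, ¬ G.Adj b u ∧ b ≠ u)
    (e : (pK2 k ⊕g Hi) ↪g G.induce s) :
    Nonempty ((pK2 (k+1) ⊕g Hi) ↪g G) := by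
  classical
  let E : (Fin k × Fin 2) ⊕ Wi → V := fun x => ↑(e x)
  have hEs : ∀ x, E x ∈ s := fun x => (e x).2
  have hEinj : Function.Injective E := fun x y h => e.injective (Subtype.ext h)
  have hEadj : ∀ x y, G.Adj (E x) (E y) ↔ (pK2 k ⊕g Hi).Adj x y := by
    intro x y
    rw [← e.map_rel_iff]
    rfl
  let A : Fin 2 → V := fun r => if r = 0 then a else b
  have hAs : ∀ r, A r ∉ s := by
    intro r hs
    by_cases hr : r = 0
    · simp only [A, hr, if_pos] at hs
      exact (ha a hs).2 rfl
    · simp only [A, if_neg hr] at hs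
      exact (hb b hs).2 rfl
  have hAE : ∀ r x, A r ≠ E x := fun r x h => hAs r (h ▸ hEs x)
  have hAEadj : ∀ r x, ¬ G.Adj (A r) (E x) := by
    intro r x h
    by_cases hr : r = 0
    · simp only [A, hr, if_pos] at h
      exact (ha _ (hEs x)).1 h
    · simp only [A, if_neg hr] at h
      exact (hb _ (hEs x)).1 h
  have hAadj : ∀ r r' : Fin 2, G.Adj (A r) (A r') ↔ r ≠ r' := by
    rw [Fin.forall_fin_two]
    constructor <;> rw [Fin.forall_fin_two] <;>
      simp [A, G.irrefl, hab, hab.symm]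
  have hAinj : ∀ r r' : Fin 2, A r = A r' → r = r' := by
    rw [Fin.forall_fin_two]
    constructor <;> rw [Fin.forall_fin_two] <;> simp [A, hab.ne, hab.ne']
  let φ : (Fin (k+1) × Fin 2) ⊕ Wi → V := fun x =>
    match x with
    | Sum.inl m => if h : (m.1 : ℕ) < k then E (Sum.inl (⟨m.1, h⟩, m.2)) else A m.2
    | Sum.inr w => E (Sum.inr w)
  have hφinj : Function.Injective φ := by
    rintro (⟨i, r⟩ | w) (⟨i', r'⟩ | w') h
    · simp only [φ] at h
      split_ifs at h with h1 h2 h2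
      · have := hEinj h
        simp only [Sum.inl.injEq, Prod.mk.injEq, Fin.mk.injEq] at this
        simp only [Sum.inl.injEq, Prod.mk.injEq]
        exact ⟨Fin.ext this.1, this.2⟩
      · exact absurd h.symm (hAE _ _)
      · exact absurd h (hAE _ _)
      · have hlt := i.isLt
        have hlt' := i'.isLt
        have hi : i = i' := by
          apply Fin.ext
          simp only [not_lt] at h1 h2
          omega
        have hr : r = r' := hAinj _ _ h
        simp [hi, hr]
    · simp only [φ] at h
      split_ifs at h with h1
      · exact absurd (hEinj h) (by simp)
      · exact absurd h (hAE _ _)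
    · simp only [φ] at h
      split_ifs at h with h1
      · exact absurd (hEinj h.symm) (by simp)
      · exact absurd h.symm (hAE _ _)
    · simpa using hEinj (h : E (Sum.inr w) = E (Sum.inr w'))
  refine ⟨⟨⟨φ, hφinj⟩, ?_⟩⟩
  intro x y
  rcases x with ⟨i, r⟩ | w <;> rcases y with ⟨i', r'⟩ | w'
  · simp only [Function.Embedding.coeFn_mk, φ]
    split_ifs with h1 h2 h2
    · rw [hEadj]
      show _ ↔ (i = i' ∧ r ≠ r')
      rw [show ((pK2 k ⊕g Hi).Adj (Sum.inl (⟨i.1, h1⟩, r)) (Sum.inl (⟨i'.1, h2⟩, r')))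
           ↔ ((⟨i.1, h1⟩ : Fin k) = ⟨i'.1, h2⟩ ∧ r ≠ r') from Iff.rfl]
      simp [Fin.ext_iff]
    · constructor
      · intro hadj
        exact absurd hadj.symm (hAEadj _ _)
      · rintro ⟨hii, -⟩
        exfalso
        have hlt := i.isLt
        have hlt' := i'.isLt
        rw [Fin.ext_iff] at hii
        simp only [not_lt] at *
        omega
    · constructor
      · intro hadj
        exact absurd hadj (hAEadj _ _)
      · rintro ⟨hii, -⟩
        exfalso
        have hlt := i.isLt
        have hlt' := i'.isLt
        rw [Fin.ext_iff] at hii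
        simp only [not_lt] at *
        omega
    · rw [hAadj]
      show _ ↔ (i = i' ∧ r ≠ r')
      have hlt := i.isLt
      have hlt' := i'.isLt
      simp only [not_lt] at h1 h2
      have : i = i' := Fin.ext (by omega)
      simp [this]
  · simp only [Function.Embedding.coeFn_mk, φ]
    split_ifs with h1
    · rw [hEadj]
      exact Iff.rfl
    · exact iff_of_false (hAEadj _ _) (by simp)
  · simp only [Function.Embedding.coeFn_mk, φ]
    split_ifs with h1
    · rw [hEadj]
      exact Iff.rfl
    · exact iff_of_false (fun h => (hAEadj _ _) h.symm) (by simp)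
  · simp only [Function.Embedding.coeFn_mk, φ]
    rw [hEadj]
    exact Iff.rfl

lemma free_zero {Wi : Type} {Hi : SimpleGraph Wi}
    (h : IsEmpty ((pK2 0 ⊕g Hi) ↪g G)) : IsEmpty (Hi ↪g G) := by
  constructor
  intro f
  apply h.false
  refine ⟨⟨fun x => Sum.elim (fun m => (m.1).elim0) f x, ?_⟩, ?_⟩
  · rintro (m | w) (m' | w') hh
    · exact m.1.elim0
    · exact m.1.elim0
    · exact m'.1.elim0
    · simpa using f.injective hh
  · rintro (m | w) (m' | w')
    · exact m.1.elim0
    · exact m.1.elim0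
    · exact m'.1.elim0
    · show G.Adj (f w) (f w') ↔ _
      rw [f.map_rel_iff]
      exact Iff.rfl

end Ext


section Helpers
variable {V : Type} {G : SimpleGraph V}

/-- Coloring a graph from a (not necessarily disjoint) cover by induced subgraphs. -/
lemma colorable_of_cover {ι : Type} [Fintype ι] (G : SimpleGraph V)
    (S : ι → Set V) (c : ι → ℕ) (hcov : ∀ v, ∃ i, v ∈ S i)
    (hcol : ∀ i, (G.induce (S i)).Colorable (c i)) :
    G.Colorable (∑ i, c i) := by
  classical
  choose idx hidx using hcov
  have Cs : ∀ i, (G.induce (S i)).Coloring (Fin (c i)) := fun i => (hcol i).some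
  let N : V → ℕ := fun w => ((Cs (idx w)) ⟨w, hidx w⟩ : ℕ)
  have hNlt : ∀ w, N w < c (idx w) := fun w => ((Cs (idx w)) ⟨w, hidx w⟩).isLt
  have key : ∀ (w : V) (i : ι) (h : idx w = i) (hw : w ∈ S i),
      N w = ((Cs i) ⟨w, hw⟩ : ℕ) := by
    intro w i h hw
    subst h
    rfl
  have hcard : Fintype.card (Σ i : ι, Fin (c i)) = ∑ i, c i := by
    simp [Fintype.card_sigma]
  have C : G.Coloring (Σ i : ι, Fin (c i)) := by
    refine Coloring.mk (fun v => ⟨idx v, ⟨N v, hNlt v⟩⟩) ?_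
    intro a b hab heq
    have h1 : idx a = idx b := congrArg Sigma.fst heq
    have hb' : b ∈ S (idx a) := h1 ▸ hidx b
    have hvalid : (Cs (idx a)) ⟨a, hidx a⟩ ≠ (Cs (idx a)) ⟨b, hb'⟩ := by
      apply (Cs (idx a)).valid
      exact hab
    have h2 : N a = N b := by
      have := congrArg (fun (x : Σ i : ι, Fin (c i)) => (x.2 : ℕ)) heq
      simpa using this
    apply hvalid
    apply Fin.ext
    have hNb : N b = ((Cs (idx a)) ⟨b, hb'⟩ : ℕ) := key b (idx a) h1.symm hb'
    calc ((Cs (idx a)) ⟨a, hidx a⟩ : ℕ) = N a := rfl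
      _ = N b := h2
      _ = ((Cs (idx a)) ⟨b, hb'⟩ : ℕ) := hNb
  exact hcard ▸ C.colorable

lemma isNClique_map_embedding {VA VB : Type} {GA : SimpleGraph VA} {GB : SimpleGraph VB}
    (e : GA ↪g GB) {n : ℕ} {t : Finset VA} (h : GA.IsNClique n t) :
    GB.IsNClique n (t.map e.toEmbedding) := by
  constructor
  · intro x hx y hy hne
    simp only [Finset.coe_map, Set.mem_image, Finset.mem_coe] at hx hy
    obtain ⟨x', hx', rfl⟩ := hx
    obtain ⟨y', hy', rfl⟩ := hy
    have hne' : x' ≠ y' := fun hc => hne (by rw [hc])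
    exact e.map_rel_iff.mpr (h.1 hx' hy' hne')
  · rw [Finset.card_map, h.2]

lemma le_cliqueNum_of_isNClique [Fintype V] {n : ℕ} {t : Finset V}
    (h : G.IsNClique n t) : n ≤ G.cliqueNum := by
  have := h.1.card_le_cliqueNum
  rwa [h.2] at this

lemma cliqueNum_le_of_embedding {VA VB : Type} [Fintype VA] [Fintype VB]
    {GA : SimpleGraph VA} {GB : SimpleGraph VB} (e : GA ↪g GB) :
    GA.cliqueNum ≤ GB.cliqueNum := by
  obtain ⟨t, ht⟩ := GA.exists_isNClique_cliqueNum
  exact le_cliqueNum_of_isNClique (isNClique_map_embedding e ht)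

lemma isEmpty_of_cliqueNum_le_zero [Fintype V] (h : G.cliqueNum ≤ 0) : IsEmpty V := by
  by_contra hne
  rw [not_isEmpty_iff] at hne
  obtain ⟨u⟩ := hne
  have h1 : G.IsNClique 1 {u} := isNClique_singleton.mpr rfl
  have := le_cliqueNum_of_isNClique h1
  omega

lemma mem_of_mem_map_induce {s : Set V} {t : Finset ↥s} {x : V}
    (hx : x ∈ t.map (SimpleGraph.Embedding.induce (G := G) s).toEmbedding) :
    ∃ y : ↥s, y ∈ t ∧ ↑y = x := by
  rw [Finset.mem_map] at hx
  obtain ⟨y, hy, hxy⟩ := hx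
  exact ⟨y, hy, hxy⟩

lemma free_induce {Wi : Type} {Hi : SimpleGraph Wi} (s : Set V)
    (h : IsEmpty (Hi ↪g G)) : IsEmpty (Hi ↪g G.induce s) :=
  ⟨fun f => h.false ((SimpleGraph.Embedding.induce s).comp f)⟩

end Helpers

lemma pd_colorable {ι : Type} {W : ι → Type} [∀ i, Fintype (W i)] {H : ∀ i, SimpleGraph (W i)}
    (hdiv : ∀ (V : Type) [Fintype V] (G : SimpleGraph V),
      (∀ i, IsEmpty (H i ↪g G)) → PerfectlyDivisible G) :
    ∀ (n : ℕ) (V : Type) [Fintype V] (G : SimpleGraph V),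
      (∀ i, IsEmpty (H i ↪g G)) → G.cliqueNum ≤ n → G.Colorable ((n+1).choose 2) := by
  intro n
  induction n with
  | zero =>
    intro V _ G hfree hcl
    haveI := isEmpty_of_cliqueNum_le_zero hcl
    exact Colorable.of_isEmpty _
  | succ n IHn =>
    intro V _ G hfree hcl
    cases isEmpty_or_nonempty V with
    | inl hV => exact Colorable.of_isEmpty _
    | inr hV =>
      classical
      obtain ⟨A, B, hun, hdisj, hperf, hlt⟩ := hdiv V G hfree Set.univ ⟨hV.some, trivial⟩
      haveI : Fintype ↥A := Fintype.ofFinite _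
      haveI : Fintype ↥B := Fintype.ofFinite _
      haveI : Fintype ↥(Set.univ : Set V) := Fintype.ofFinite _
      haveI : Fintype ↥(Set.univ : Set ↥A) := Fintype.ofFinite _
      -- A part
      have hperfA := hperf Set.univ
      have hCA : ((G.induce A).induce Set.univ).Colorable
          (((G.induce A).induce Set.univ).cliqueNum) :=
        chromaticNumber_le_iff_colorable.mp (le_of_eq hperfA)
      have hA : (G.induce A).Colorable (((G.induce A).induce Set.univ).cliqueNum) :=
        Colorable.of_hom (induceUnivIso (G.induce A)).symm.toEmbedding.toHom hCA
      have hAbound : ((G.induce A).induce Set.univ).cliqueNum ≤ n + 1 := by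
        have h1 := cliqueNum_le_of_embedding
          (SimpleGraph.Embedding.induce (G := G.induce A) Set.univ)
        have h2 := cliqueNum_le_of_embedding (SimpleGraph.Embedding.induce (G := G) A)
        omega
      -- B part
      have hBfree : ∀ i, IsEmpty (H i ↪g G.induce B) := fun i => free_induce B (hfree i)
      have hBbound : (G.induce B).cliqueNum ≤ n := by
        have h1 := cliqueNum_le_of_embedding (SimpleGraph.Embedding.induce (G := G) Set.univ)
        omega
      have hB := IHn ↥B (G.induce B) hBfree hBbound
      -- cover
      have hcov : ∀ v : V, ∃ b : Bool, v ∈ (fun t : Bool => cond t A B) b := by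
        intro v
        have hv : v ∈ A ∪ B := by rw [hun]; trivial
        rcases hv with hv | hv
        · exact ⟨true, hv⟩
        · exact ⟨false, hv⟩
      have hcol : ∀ b : Bool, (G.induce ((fun t : Bool => cond t A B) b)).Colorable
          ((fun t : Bool => cond t (n+1) ((n+1).choose 2)) b) := by
        intro b
        cases b
        · exact hB
        · exact hA.mono hAbound
      have := colorable_of_cover G _ _ hcov hcol
      refine this.mono (le_of_eq ?_)
      rw [Fintype.sum_bool]
      show (n+1) + (n+1).choose 2 = (n+2).choose 2
      rw [show n + 2 = (n+1) + 1 from rfl, Nat.choose_succ_succ (n+1) 1, Nat.choose_one_right]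


lemma hockey (KK : ℕ) : ∀ N : ℕ, ∑ i ∈ Finset.range N, (i + KK).choose KK = (N + KK).choose (KK+1) := by
  intro N
  induction N with
  | zero => simp [Nat.choose_eq_zero_of_lt (Nat.lt_succ_self KK)]
  | succ N ih =>
    rw [Finset.sum_range_succ, ih, show N + 1 + KK = (N + KK) + 1 by omega,
      Nat.choose_succ_succ (N + KK) KK]
    simp only [Nat.succ_eq_add_one]
    omega

lemma master {ι : Type} {W : ι → Type} [∀ i, Fintype (W i)] {H : ∀ i, SimpleGraph (W i)}
    (hdiv : ∀ (V : Type) [Fintype V] (G : SimpleGraph V),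
      (∀ i, IsEmpty (H i ↪g G)) → PerfectlyDivisible G) :
    ∀ (k n : ℕ) (V : Type) [Fintype V] (G : SimpleGraph V),
      (∀ i, IsEmpty ((pK2 k ⊕g H i) ↪g G)) → G.cliqueNum ≤ n →
      G.Colorable ((n + (2*k+1)).choose (2*k+2)) := by
  intro k
  induction k with
  | zero =>
    intro n V _ G hfree hcl
    have := pd_colorable hdiv n V G (fun i => free_zero (hfree i)) hcl
    refine this.mono (le_of_eq ?_)
    norm_num
  | succ k IHk =>
    intro n
    induction n with
    | zero =>
      intro V _ G hfree hcl
      haveI := isEmpty_of_cliqueNum_le_zero hcl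
      exact Colorable.of_isEmpty _
    | succ n IHn =>
      intro V _ G hfree hcl
      by_cases hn : G.cliqueNum ≤ n
      · exact (IHn V G hfree hn).mono (Nat.choose_le_choose _ (by omega))
      classical
      have hceq : G.cliqueNum = n+1 := le_antisymm hcl (by omega)
      obtain ⟨K, hK⟩ := G.exists_isNClique_cliqueNum
      rw [hceq] at hK
      have hKcard : K.card = n+1 := hK.2
      let ve : ↥K ≃ Fin (n+1) := K.equivFin.trans (finCongr hKcard)
      let v : Fin (n+1) → V := fun m => ((ve.symm m) : V)
      have hvinj : Function.Injective v := by
        intro m m' h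
        exact (Equiv.injective ve.symm).eq_iff.mp (Subtype.coe_injective h)
      have hvK : ∀ m, v m ∈ K := fun m => (ve.symm m).2
      have hvadj : ∀ m m', m ≠ m' → G.Adj (v m) (v m') := by
        intro m m' hne
        exact hK.1 (Finset.mem_coe.mpr (hvK m)) (Finset.mem_coe.mpr (hvK m'))
          (fun hc => hne (hvinj hc))
      have hvsurj : ∀ x ∈ K, ∃ m, v m = x := by
        intro x hx
        exact ⟨ve ⟨x, hx⟩, by simp [v]⟩
      -- the classes
      let S : Option (Fin (n+1)) → Set V := fun o =>
        match o with
        | none => {u | G.Adj u (v 0)}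
        | some j =>
          if j = 0 then {u | ¬ G.Adj u (v 0) ∧ ∀ m, m ≠ 0 → G.Adj u (v m)}
          else {u | ¬ G.Adj u (v 0) ∧ u ≠ v 0 ∧ ¬ G.Adj u (v j) ∧
            ∀ m, m ≠ 0 → m < j → G.Adj u (v m)}
      let c : Option (Fin (n+1)) → ℕ := fun o =>
        match o with
        | none => (n + (2*(k+1)+1)).choose (2*(k+1)+2)
        | some j => if j = 0 then 1 else (n + (2*k+3) - j.1).choose (2*k+2)
      -- membership unfolding for the j-classes
      have hSj : ∀ (j : Fin (n+1)), j ≠ 0 → ∀ x ∈ S (some j),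
          ¬ G.Adj x (v 0) ∧ x ≠ v 0 ∧ ¬ G.Adj x (v j) ∧
            ∀ m, m ≠ 0 → m < j → G.Adj x (v m) := by
        intro j hj x hx
        simpa only [S, if_neg hj, Set.mem_setOf_eq] using hx
      -- cover
      have hcov : ∀ u : V, ∃ o, u ∈ S o := by
        intro u
        by_cases h0 : G.Adj u (v 0)
        · exact ⟨none, h0⟩
        by_cases hall : ∀ m, m ≠ 0 → G.Adj u (v m)
        · refine ⟨some 0, ?_⟩
          show u ∈ (if (0 : Fin (n+1)) = 0 then _ else _)
          rw [if_pos rfl]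
          exact ⟨h0, hall⟩
        · push_neg at hall
          obtain ⟨m0, hm0ne, hm0⟩ := hall
          set T : Finset (Fin (n+1)) :=
            Finset.univ.filter (fun m => m ≠ 0 ∧ ¬ G.Adj u (v m)) with hT
          have hTne : T.Nonempty := ⟨m0, by simp [hT, hm0ne, hm0]⟩
          set j := T.min' hTne with hjdef
          have hjT : j ∈ T := T.min'_mem hTne
          rw [hT, Finset.mem_filter] at hjT
          have hj0 : j ≠ 0 := hjT.2.1
          refine ⟨some j, ?_⟩
          show u ∈ (if j = 0 then _ else _)
          rw [if_neg hj0]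
          refine ⟨h0, ?_, hjT.2.2, ?_⟩
          · intro hc
            exact hm0 (hc ▸ hvadj 0 m0 (Ne.symm hm0ne))
          · intro m hmne hmlt
            by_contra hc
            have hmT : m ∈ T := by
              rw [hT, Finset.mem_filter]
              exact ⟨Finset.mem_univ m, hmne, hc⟩
            exact absurd hmlt (not_lt.mpr (T.min'_le m hmT))
      -- colorability of each class
      have hcol : ∀ o, (G.induce (S o)).Colorable (c o) := by
        intro o
        haveI : Fintype ↥(S o) := Fintype.ofFinite _
        match o with
        | none =>
          refine IHn ↥(S none) (G.induce (S none))
            (fun i => free_induce _ (hfree i)) ?_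
          -- clique number of the neighborhood of v 0 is at most n
          by_contra hgt
          push_neg at hgt
          obtain ⟨t, ht⟩ := (G.induce (S none)).exists_isNClique_cliqueNum
          have ht' := isNClique_map_embedding (SimpleGraph.Embedding.induce (S none)) ht
          have hins := ht'.insert (a := v 0) ?_
          · have hle := le_cliqueNum_of_isNClique hins
            omega
          · intro x hx
            obtain ⟨y, hy, hyx⟩ := mem_of_mem_map_induce hx
            have : G.Adj ↑y (v 0) := y.2
            rw [hyx] at this
            exact this.symm
        | some j =>
          by_cases hj : j = 0
          · subst hj
            -- stable set
            have hstable : ∀ x y : ↥(S (some 0)), G.Adj ↑x ↑y → False := by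
              rintro ⟨x, hx⟩ ⟨y, hy⟩ hxy0
              have hxy : G.Adj x y := hxy0
              have hx' : ¬ G.Adj x (v 0) ∧ ∀ m, m ≠ 0 → G.Adj x (v m) := by
                simpa only [S, if_pos rfl, Set.mem_setOf_eq] using hx
              have hy' : ¬ G.Adj y (v 0) ∧ ∀ m, m ≠ 0 → G.Adj y (v m) := by
                simpa only [S, if_pos rfl, Set.mem_setOf_eq] using hy
              by_cases hx0 : x = v 0
              · exact hy'.1 (by rw [hx0] at hxy; exact hxy.symm)
              by_cases hy0 : y = v 0
              · exact hx'.1 (by rw [hy0] at hxy; exact hxy)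
              have hadjK : ∀ z ∈ K.erase (v 0), G.Adj y z ∧ G.Adj x z := by
                intro z hz
                rw [Finset.mem_erase] at hz
                obtain ⟨m, hm⟩ := hvsurj z hz.2
                have hm0 : m ≠ 0 := by
                  intro hc
                  rw [hc] at hm
                  exact hz.1 hm.symm
                exact ⟨hm ▸ hy'.2 m hm0, hm ▸ hx'.2 m hm0⟩
              have h1 : G.IsNClique n (K.erase (v 0)) := by
                constructor
                · exact hK.1.subset (by
                    intro z hz
                    exact Finset.mem_coe.mpr (Finset.mem_of_mem_erase (Finset.mem_coe.mp hz)))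
                · rw [Finset.card_erase_of_mem (hvK 0), hKcard]
                  omega
              have h2 := h1.insert (a := y) (fun z hz => (hadjK z hz).1)
              have h3 : G.IsNClique (n+2) (insert x (insert y (K.erase (v 0)))) := by
                refine h2.insert (a := x) ?_
                intro z hz
                rw [Finset.mem_insert] at hz
                rcases hz with rfl | hz
                · exact hxy
                · exact (hadjK z hz).2
              have := le_cliqueNum_of_isNClique h3
              omega
            have hc1 : c (some 0) = 1 := by simp [c]
            rw [hc1]
            exact ⟨Coloring.mk (fun _ => 0) (fun {x y} hadj _ => hstable x y hadj)⟩
          · -- the classes C_j for j ≠ 0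
            have hsj := hSj j hj
            have hfreej : ∀ i, IsEmpty ((pK2 k ⊕g H i) ↪g G.induce (S (some j))) := by
              intro i
              constructor
              intro f
              have hne := free_extend (G := G) (S (some j)) (v 0) (v j)
                (hvadj 0 j (Ne.symm hj)) ?_ ?_ f
              · exact (hfree i).false hne.some
              · intro u hu
                obtain ⟨h1, h2, h3, h4⟩ := hsj u hu
                exact ⟨fun h => h1 h.symm, fun h => h2 h.symm⟩
              · intro u hu
                obtain ⟨h1, h2, h3, h4⟩ := hsj u hu
                refine ⟨fun h => h3 h.symm, fun h => h1 ?_⟩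
                rw [← h]
                exact hvadj j 0 hj
            have hcb : (G.induce (S (some j))).cliqueNum + j.1 ≤ n + 2 := by
              obtain ⟨t, ht⟩ := (G.induce (S (some j))).exists_isNClique_cliqueNum
              have ht' := isNClique_map_embedding
                (SimpleGraph.Embedding.induce (S (some j))) ht
              set t' := t.map (SimpleGraph.Embedding.induce (S (some j))).toEmbedding
                with ht'def
              have ht'mem : ∀ x ∈ t', x ∈ S (some j) := by
                intro x hx
                obtain ⟨y, hy, hyx⟩ := mem_of_mem_map_induce hx
                exact hyx ▸ y.2
              set M : Finset V := (Finset.Ioo (0 : Fin (n+1)) j).image v with hM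
              have hMmem : ∀ x ∈ M, ∃ m, (0 < m ∧ m < j) ∧ v m = x := by
                intro x hx
                rw [hM, Finset.mem_image] at hx
                obtain ⟨m, hm, hmx⟩ := hx
                rw [Finset.mem_Ioo] at hm
                exact ⟨m, hm, hmx⟩
              have hMcard : M.card = j.1 - 1 := by
                rw [hM, Finset.card_image_of_injective _ hvinj, Fin.card_Ioo]
                simp
              have hadjtM : ∀ x ∈ t', ∀ z ∈ M, G.Adj x z := by
                intro x hx z hz
                obtain ⟨m, ⟨hm0, hmj⟩, rfl⟩ := hMmem z hz
                exact (hsj x (ht'mem x hx)).2.2.2 m (Fin.pos_iff_ne_zero.mp hm0) hmj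
              have hdisjtM : Disjoint t' M := by
                rw [Finset.disjoint_left]
                intro x hx hxM
                exact (hadjtM x hx x hxM).ne rfl
              have hQ : G.IsNClique ((G.induce (S (some j))).cliqueNum + (j.1 - 1))
                  (t' ∪ M) := by
                constructor
                · intro z1 h1 z2 h2 hne
                  rw [Finset.coe_union, Set.mem_union, Finset.mem_coe, Finset.mem_coe]
                    at h1 h2
                  rcases h1 with h1 | h1 <;> rcases h2 with h2 | h2
                  · exact ht'.1 (Finset.mem_coe.mpr h1) (Finset.mem_coe.mpr h2) hne
                  · exact hadjtM z1 h1 z2 h2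
                  · exact (hadjtM z2 h2 z1 h1).symm
                  · obtain ⟨m1, hm1, rfl⟩ := hMmem z1 h1
                    obtain ⟨m2, hm2, rfl⟩ := hMmem z2 h2
                    exact hvadj m1 m2 (fun hc => hne (by rw [hc]))
                · rw [Finset.card_union_of_disjoint hdisjtM, ht'.2, hMcard]
              have hle := le_cliqueNum_of_isNClique hQ
              rw [hceq] at hle
              have hj1 : 1 ≤ j.1 := by
                rcases Nat.eq_zero_or_pos j.1 with h | h
                · exact absurd (Fin.ext (h.trans (Fin.val_zero _).symm)) hj
                · exact h
              omega
            have hcj := IHk ((G.induce (S (some j))).cliqueNum) ↥(S (some j))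
              (G.induce (S (some j))) hfreej le_rfl
            have hcc : c (some j) = (n + (2*k+3) - j.1).choose (2*k+2) := by
              simp [c, hj]
            rw [hcc]
            refine hcj.mono (Nat.choose_le_choose _ ?_)
            have := j.isLt
            omega
      -- assemble via the cover
      have hsum := colorable_of_cover G S c hcov hcol
      refine hsum.mono (le_of_eq ?_)
      rw [Fintype.sum_option]
      have h1 : ∑ j : Fin (n+1), c (some j)
          = 1 + ∑ i : Fin n, (n + (2*k+3) - (i.1+1)).choose (2*k+2) := by
        rw [Fin.sum_univ_succ]
        have hc0 : c (some (0 : Fin (n+1))) = 1 := by simp [c]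
        rw [hc0]
        rfl
      have h2 : ∑ i : Fin n, (n + (2*k+3) - (i.1+1)).choose (2*k+2)
          = ∑ i ∈ Finset.range n, (i + (2*k+3)).choose (2*k+2) := by
        rw [Fin.sum_univ_eq_sum_range (fun i => (n + (2*k+3) - (i+1)).choose (2*k+2)) n]
        rw [← Finset.sum_range_reflect]
        apply Finset.sum_congr rfl
        intro i hi
        rw [Finset.mem_range] at hi
        congr 1
        omega
      have h3 : (1 : ℕ) + ∑ i ∈ Finset.range n, (i + (2*k+3)).choose (2*k+2)
          = (n + (2*k+3)).choose (2*k+3) := by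
        have hh := hockey (2*k+2) (n+1)
        rw [Finset.sum_range_succ'] at hh
        have heq : ∀ i : ℕ, i + 1 + (2*k+2) = i + (2*k+3) := fun i => by omega
        simp only [heq, Nat.zero_add, Nat.choose_self] at hh
        rw [show 2*k+2+1 = 2*k+3 by omega] at hh
        try omega
      rw [h1, h2, h3]
      have hcn : c none = (n + (2*k+3)).choose (2*k+4) := rfl
      rw [hcn, show (n+1) + (2*(k+1)+1) = (n + (2*k+3)) + 1 by omega,
        show 2*(k+1)+2 = (2*k+3)+1 by omega, Nat.choose_succ_succ]
      simp only [Nat.succ_eq_add_one]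
      rw [show 2*k+3+1 = 2*k+4 by omega]
      omega

theorem stmt_13 (p : ℕ) (hp : 1 ≤ p) {ι : Type} (W : ι → Type) [∀ i, Fintype (W i)]
    (H : ∀ i, SimpleGraph (W i))
    (hdiv : ∀ (V : Type) [Fintype V] (G : SimpleGraph V),
      (∀ i, IsEmpty (H i ↪g G)) → PerfectlyDivisible G)
    (V : Type) [Fintype V] (G : SimpleGraph V)
    (hG : ∀ i, IsEmpty ((pK2 (p - 1) ⊕g H i) ↪g G)) :
    G.chromaticNumber ≤ (Nat.choose (G.cliqueNum - 1 + 2 * p) (2 * p) : ℕ∞) := by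
  classical
  have h := master hdiv (p-1) G.cliqueNum V G hG le_rfl
  rw [chromaticNumber_le_iff_colorable]
  refine h.mono ?_
  rw [show 2*(p-1)+2 = 2*p by omega]
  exact Nat.choose_le_choose _ (by omega)
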